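/- arXiv:2308.06126 — 2 statements merged into one kernel-verified Lean document; each statement's English description precedes it below -/
import Mathlib

section
/- Let Z_1, Z_2, … be i.i.d. standard normal random variables, m ≥ 1 an integer, and define M := Z_1²/Σ_{t=1}^∞ t^{-2}Z_t² and M̃ := Z_1²/Σ_{t=1}^m t^{-2}Z_t². Then 0 ≤ E[M̃ - M] ≤ 9·E[Σ_{t=m+1}^∞ t^{-2}Z_t²]·E[(Z_1²+Z_2²+Z_3²)^{-1}], and in particular E[M̃ - M] ≤ C/m for an absolute constant C. -/
open MeasureTheory ProbabilityTheory
open scoped ENNReal NNReal ProbabilityTheory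

noncomputable section Stmt8Aux

namespace Stmt8Aux

variable {Ω : Type*} [MeasureSpace Ω] (Z : ℕ → Ω → ℝ)

def g (t : ℕ) (ω : Ω) : ℝ := ((t : ℝ) ^ 2)⁻¹ * (Z t ω) ^ 2

def Sm (m : ℕ) (ω : Ω) : ℝ := ∑ t ∈ Finset.Icc 1 m, g Z t ω

def Sinf (ω : Ω) : ℝ := ∑' t : ℕ, g Z t ω

def D (m : ℕ) (ω : Ω) : ℝ := (Z 1 ω) ^ 2 / Sm Z m ω - (Z 1 ω) ^ 2 / Sinf Z ω

def tail (m : ℕ) (ω : Ω) : ℝ := ∑' t : ℕ, if m + 1 ≤ t then g Z t ω else 0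

def X (ω : Ω) : ℝ := (Z 1 ω) ^ 2 + (Z 2 ω) ^ 2 + (Z 3 ω) ^ 2

def W (ω : Ω) : ℝ := (X Z ω)⁻¹

def T (m : ℕ) (ω : Ω) : ℝ :=
  (∑' t : ℕ, ENNReal.ofReal (if m + 1 ≤ t then g Z t ω else 0)).toReal

def s (m : ℕ) : ℝ := ∑' t : ℕ, if m + 1 ≤ t then ((t : ℝ) ^ 2)⁻¹ else 0

lemma g_nonneg (t : ℕ) (ω : Ω) : 0 ≤ g Z t ω := by unfold g; positivity

lemma g_one (ω : Ω) : g Z 1 ω = (Z 1 ω) ^ 2 := by simp [g]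

lemma Sm_nonneg (m : ℕ) (ω : Ω) : 0 ≤ Sm Z m ω :=
  Finset.sum_nonneg fun t _ => g_nonneg Z t ω

lemma Sinf_nonneg (ω : Ω) : 0 ≤ Sinf Z ω := tsum_nonneg fun t => g_nonneg Z t ω

lemma sq_le_Sm {m : ℕ} (hm : 1 ≤ m) (ω : Ω) : (Z 1 ω) ^ 2 ≤ Sm Z m ω := by
  rw [← g_one Z ω]
  exact Finset.single_le_sum (fun t _ => g_nonneg Z t ω)
    (Finset.mem_Icc.mpr ⟨le_refl 1, hm⟩)

lemma D_nonneg {m : ℕ} (hm : 1 ≤ m) (ω : Ω) : 0 ≤ D Z m ω := by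
  by_cases hz : Z 1 ω = 0
  · simp [D, hz]
  by_cases hsum : Summable fun t => g Z t ω
  · have h1 : (Z 1 ω) ^ 2 ≤ Sm Z m ω := sq_le_Sm Z hm ω
    have h0 : 0 < (Z 1 ω) ^ 2 := by positivity
    have hS : Sm Z m ω ≤ Sinf Z ω :=
      Summable.sum_le_tsum (Finset.Icc 1 m) (fun t _ => g_nonneg Z t ω) hsum
    have hSm : 0 < Sm Z m ω := lt_of_lt_of_le h0 h1
    have hle : (Z 1 ω) ^ 2 / Sinf Z ω ≤ (Z 1 ω) ^ 2 / Sm Z m ω := by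
      gcongr
    simpa [D, sub_nonneg] using hle
  · have h2 : Sinf Z ω = 0 := tsum_eq_zero_of_not_summable hsum
    have : 0 ≤ (Z 1 ω) ^ 2 / Sm Z m ω := div_nonneg (sq_nonneg _) (Sm_nonneg Z m ω)
    simpa [D, h2] using this

lemma D_le_one {m : ℕ} (hm : 1 ≤ m) (ω : Ω) : D Z m ω ≤ 1 := by
  have h2 : 0 ≤ (Z 1 ω) ^ 2 / Sinf Z ω := div_nonneg (sq_nonneg _) (Sinf_nonneg Z ω)
  have h1 : (Z 1 ω) ^ 2 / Sm Z m ω ≤ 1 := by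
    rcases eq_or_lt_of_le (Sm_nonneg Z m ω) with h | h
    · have hz : (Z 1 ω) ^ 2 = 0 :=
        le_antisymm (h ▸ sq_le_Sm Z hm ω) (sq_nonneg _)
      simp [hz]
    · exact div_le_one_of_le₀ (sq_le_Sm Z hm ω) h.le
  have h3 : D Z m ω ≤ (Z 1 ω) ^ 2 / Sm Z m ω := by
    unfold D; linarith
  linarith

lemma tail_summand_nonneg (m : ℕ) (ω : Ω) (t : ℕ) :
    (0:ℝ) ≤ if m + 1 ≤ t then g Z t ω else 0 := by
  by_cases h : m + 1 ≤ t <;> simp [h, g_nonneg]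

lemma tail_summable {m : ℕ} {ω : Ω} (hsum : Summable fun t => g Z t ω) :
    Summable fun t => if m + 1 ≤ t then g Z t ω else 0 := by
  refine Summable.of_nonneg_of_le (tail_summand_nonneg Z m ω) (fun t => ?_) hsum
  by_cases h : m + 1 ≤ t <;> simp [h, g_nonneg]

lemma tail_nonneg (m : ℕ) (ω : Ω) : 0 ≤ tail Z m ω :=
  tsum_nonneg (tail_summand_nonneg Z m ω)

lemma T_eq_tail {m : ℕ} (ω : Ω) (hsum : Summable fun t => g Z t ω) :
    T Z m ω = tail Z m ω := by
  unfold T tail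
  rw [← ENNReal.ofReal_tsum_of_nonneg (tail_summand_nonneg Z m ω) (tail_summable Z hsum)]
  exact ENNReal.toReal_ofReal (tail_nonneg Z m ω)

lemma Sinf_eq_toReal (ω : Ω) (hsum : Summable fun t => g Z t ω) :
    Sinf Z ω = (∑' t : ℕ, ENNReal.ofReal (g Z t ω)).toReal := by
  unfold Sinf
  rw [← ENNReal.ofReal_tsum_of_nonneg (fun t => g_nonneg Z t ω) hsum,
    ENNReal.toReal_ofReal (tsum_nonneg fun t => g_nonneg Z t ω)]

lemma key_pointwise {m : ℕ} (hm : 1 ≤ m) (ω : Ω)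
    (hsum : Summable fun t => g Z t ω) (hz : Z 1 ω ≠ 0) :
    D Z m ω ≤ 9 * (tail Z m ω * W Z ω) := by
  have htail_sum := tail_summable Z (m := m) hsum
  have hSm_range : ∑ t ∈ Finset.range (m + 1), g Z t ω = Sm Z m ω := by
    unfold Sm
    refine (Finset.sum_subset (fun x hx => Finset.mem_range.mpr ?_) ?_).symm
    · have := (Finset.mem_Icc.mp hx).2; omega
    · intro x hx hnx
      have hx0 : x = 0 := by
        rcases Nat.eq_zero_or_pos x with h | h
        · exact h
        · exact absurd (Finset.mem_Icc.mpr ⟨h, by have := Finset.mem_range.mp hx; omega⟩) hnx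
      simp [hx0, g]
  have h3 : ∑ t ∈ Finset.range (m + 1), (if m + 1 ≤ t then g Z t ω else 0) = 0 := by
    refine Finset.sum_eq_zero fun x hx => ?_
    have := Finset.mem_range.mp hx
    simp [show ¬ (m + 1 ≤ x) by omega]
  have htail_eq : tail Z m ω = ∑' i : ℕ, g Z (i + (m + 1)) ω := by
    unfold tail
    rw [← Summable.sum_add_tsum_nat_add (m + 1) htail_sum, h3, zero_add]
    exact tsum_congr fun i => by simp
  have hsplit : Sinf Z ω = Sm Z m ω + tail Z m ω := by
    unfold Sinf
    rw [← Summable.sum_add_tsum_nat_add (m + 1) hsum, hSm_range, htail_eq]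
  have ha : 0 < (Z 1 ω) ^ 2 := by positivity
  have hSm : 0 < Sm Z m ω := lt_of_lt_of_le ha (sq_le_Sm Z hm ω)
  have hR : 0 ≤ tail Z m ω := tail_nonneg Z m ω
  have hX : 0 < X Z ω := by
    have h22 := sq_nonneg (Z 2 ω); have h32 := sq_nonneg (Z 3 ω)
    unfold X; linarith
  have hXS : X Z ω / 9 ≤ Sinf Z ω := by
    have hsum3 : ∑ t ∈ Finset.Icc 1 3, g Z t ω ≤ Sinf Z ω :=
      Summable.sum_le_tsum _ (fun t _ => g_nonneg Z t ω) hsum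
    have h123 : ∑ t ∈ Finset.Icc 1 3, g Z t ω = g Z 1 ω + g Z 2 ω + g Z 3 ω := by
      rw [show Finset.Icc 1 3 = {1, 2, 3} by decide]
      rw [Finset.sum_insert (by decide), Finset.sum_insert (by decide), Finset.sum_singleton]
      ring
    rw [h123] at hsum3
    have e2 : g Z 2 ω = (4:ℝ)⁻¹ * (Z 2 ω) ^ 2 := by norm_num [g]
    have e3 : g Z 3 ω = (9:ℝ)⁻¹ * (Z 3 ω) ^ 2 := by norm_num [g]
    rw [g_one, e2, e3] at hsum3
    have h22 := sq_nonneg (Z 2 ω); have h32 := sq_nonneg (Z 3 ω)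
    unfold X; linarith
  have hS : 0 < Sinf Z ω := lt_of_lt_of_le (by positivity) hXS
  have hSne : Sm Z m ω + tail Z m ω ≠ 0 := by rw [← hsplit]; exact hS.ne'
  have e1 : D Z m ω = (Z 1 ω) ^ 2 * tail Z m ω / (Sm Z m ω * Sinf Z ω) := by
    unfold D
    rw [hsplit]
    field_simp
    ring
  have e2 : (Z 1 ω) ^ 2 * tail Z m ω / (Sm Z m ω * Sinf Z ω)
      ≤ (Sm Z m ω * tail Z m ω) / (Sm Z m ω * (X Z ω / 9)) :=
    div_le_div₀ (mul_nonneg hSm.le hR)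
      (mul_le_mul_of_nonneg_right (sq_le_Sm Z hm ω) hR)
      (by positivity)
      (mul_le_mul_of_nonneg_left hXS hSm.le)
  have e3 : (Sm Z m ω * tail Z m ω) / (Sm Z m ω * (X Z ω / 9))
      = 9 * (tail Z m ω * W Z ω) := by
    unfold W
    field_simp
  rw [e1, ← e3]
  exact e2

lemma summable_inv_sq : Summable (fun t : ℕ => ((t : ℝ) ^ 2)⁻¹) := by
  simpa [one_div] using Real.summable_one_div_nat_pow.mpr (le_refl 2)

lemma s_summand_nonneg (m t : ℕ) : (0:ℝ) ≤ if m + 1 ≤ t then ((t : ℝ) ^ 2)⁻¹ else 0 := by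
  by_cases h : m + 1 ≤ t <;> simp [h] <;> positivity

lemma s_summable (m : ℕ) : Summable (fun t : ℕ => if m + 1 ≤ t then ((t : ℝ) ^ 2)⁻¹ else 0) := by
  refine Summable.of_nonneg_of_le (s_summand_nonneg m) (fun t => ?_) summable_inv_sq
  by_cases h : m + 1 ≤ t <;> simp [h] <;> positivity

lemma s_nonneg (m : ℕ) : 0 ≤ s m := tsum_nonneg (s_summand_nonneg m)

lemma s_le {m : ℕ} (hm : 1 ≤ m) : s m ≤ (m : ℝ)⁻¹ := by
  classical
  refine Summable.tsum_le_of_sum_le (s_summable m) fun u => ?_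
  calc ∑ t ∈ u, (if m + 1 ≤ t then ((t : ℝ) ^ 2)⁻¹ else 0)
      = ∑ t ∈ u.filter (fun t => m + 1 ≤ t), ((t : ℝ) ^ 2)⁻¹ := by
        rw [Finset.sum_filter]
    _ ≤ ∑ t ∈ Finset.Ioc m (max m (u.sup id)), ((t : ℝ) ^ 2)⁻¹ := by
        apply Finset.sum_le_sum_of_subset_of_nonneg
        · intro x hx
          rw [Finset.mem_filter] at hx
          refine Finset.mem_Ioc.mpr ⟨by omega, ?_⟩
          exact le_trans (Finset.le_sup (f := id) hx.1) (le_max_right _ _)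
        · intro x _ _; positivity
    _ ≤ (m : ℝ)⁻¹ - ((max m (u.sup id) : ℕ) : ℝ)⁻¹ :=
        sum_Ioc_inv_sq_le_sub (by omega) (le_max_left _ _)
    _ ≤ (m : ℝ)⁻¹ := by
        have : (0:ℝ) ≤ ((max m (u.sup id) : ℕ) : ℝ)⁻¹ := by positivity
        linarith

lemma s_ge {m : ℕ} (hm : m ≤ 2) : 1/3 ≤ s m := by
  have h2 : s 2 ≤ s m := by
    refine Summable.tsum_le_tsum (fun t => ?_) (s_summable 2) (s_summable m)
    by_cases h : 2 + 1 ≤ t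
    · simp [h, show m + 1 ≤ t by omega]
    · simpa [h] using s_summand_nonneg m t
  refine le_trans ?_ h2
  have hfin : ∑ t ∈ Finset.Icc (3:ℕ) 17, (if 2 + 1 ≤ t then ((t : ℝ) ^ 2)⁻¹ else 0) ≤ s 2 :=
    Summable.sum_le_tsum _ (fun t _ => s_summand_nonneg 2 t) (s_summable 2)
  have heq : ∑ t ∈ Finset.Icc (3:ℕ) 17, (if 2 + 1 ≤ t then ((t : ℝ) ^ 2)⁻¹ else 0)
      = ∑ t ∈ Finset.Icc (3:ℕ) 17, ((t : ℝ) ^ 2)⁻¹ := by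
    refine Finset.sum_congr rfl fun x hx => ?_
    have := (Finset.mem_Icc.mp hx).1
    simp [show 2 + 1 ≤ x by omega]
  have hval : (1/3 : ℝ) ≤ ∑ t ∈ Finset.Icc (3:ℕ) 17, ((t : ℝ) ^ 2)⁻¹ := by
    rw [← Finset.Ico_add_one_right_eq_Icc, Finset.sum_Ico_eq_sum_range]
    norm_num [Finset.sum_range_succ]
  linarith

section Measure

variable [IsProbabilityMeasure (ℙ : Measure Ω)]

lemma measurable_g (hmeas : ∀ t, Measurable (Z t)) (t : ℕ) : Measurable (g Z t) :=
  ((hmeas t).pow_const 2).const_mul _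

lemma x2_integrable : Integrable (fun x : ℝ => x ^ 2) (gaussianReal 0 1) := by
  rw [gaussianReal_of_var_ne_zero _ one_ne_zero]
  rw [integrable_withDensity_iff (measurable_gaussianPDF _ _)
    (ae_of_all _ fun x => ENNReal.ofReal_lt_top)]
  have h : (fun x : ℝ => x ^ 2 * (gaussianPDF 0 1 x).toReal)
      = fun x : ℝ => (Real.sqrt (2 * Real.pi))⁻¹ *
        (x ^ (2:ℝ) * Real.exp (-(1/2 : ℝ) * x ^ 2)) := by
    funext x
    rw [gaussianPDF, ENNReal.toReal_ofReal (gaussianPDFReal_nonneg _ _ _), gaussianPDFReal,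
      Real.rpow_two]
    norm_num
    rw [show -x ^ 2 / 2 = -(1/2) * x ^ 2 by ring]
    ring
  rw [h]
  exact (integrable_rpow_mul_exp_neg_mul_sq (by norm_num : (0:ℝ) < 1/2)
    (by norm_num : (-1:ℝ) < 2)).const_mul _

def kappa : ℝ := ∫ x, x ^ 2 ∂(gaussianReal 0 1)

lemma kappa_nonneg : 0 ≤ kappa := integral_nonneg fun x => sq_nonneg x

variable (hmeas : ∀ t, Measurable (Z t))
  (hgauss : ∀ t, Measure.map (Z t) ℙ = gaussianReal 0 1)

include hmeas hgauss

lemma Z2_integrable (t : ℕ) : Integrable (fun ω => (Z t ω) ^ 2) ℙ := by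
  have h1 : AEStronglyMeasurable (fun x : ℝ => x ^ 2) (Measure.map (Z t) ℙ) := by
    rw [hgauss t]; exact x2_integrable.1
  exact (integrable_map_measure h1 (hmeas t).aemeasurable).mp
    (by rw [hgauss t]; exact x2_integrable)

lemma integral_Z2 (t : ℕ) : ∫ ω, (Z t ω) ^ 2 = kappa := by
  rw [kappa, ← hgauss t]
  exact (integral_map (hmeas t).aemeasurable
    ((measurable_id.pow_const 2).aestronglyMeasurable)).symm

lemma lintegral_Z2 (t : ℕ) :
    ∫⁻ ω, ENNReal.ofReal ((Z t ω) ^ 2) = ENNReal.ofReal kappa := by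
  rw [← ofReal_integral_eq_lintegral_ofReal (Z2_integrable Z hmeas hgauss t)
    (ae_of_all _ fun ω => sq_nonneg _), integral_Z2 Z hmeas hgauss t]

omit hgauss in
lemma F_measurable : Measurable fun ω => ∑' t : ℕ, ENNReal.ofReal (g Z t ω) :=
  Measurable.ennreal_tsum fun t => (measurable_g Z hmeas t).ennreal_ofReal

lemma lintegral_F :
    ∫⁻ ω, ∑' t : ℕ, ENNReal.ofReal (g Z t ω)
      = (∑' t : ℕ, ENNReal.ofReal ((t : ℝ) ^ 2)⁻¹) * ENNReal.ofReal kappa := by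
  rw [lintegral_tsum fun t => ((measurable_g Z hmeas t).ennreal_ofReal).aemeasurable,
    ← ENNReal.tsum_mul_right]
  refine tsum_congr fun t => ?_
  calc ∫⁻ ω, ENNReal.ofReal (g Z t ω)
      = ∫⁻ ω, ENNReal.ofReal ((t : ℝ) ^ 2)⁻¹ * ENNReal.ofReal ((Z t ω) ^ 2) := by
        refine lintegral_congr fun ω => ?_
        rw [g, ENNReal.ofReal_mul (by positivity)]
    _ = ENNReal.ofReal ((t : ℝ) ^ 2)⁻¹ * ENNReal.ofReal kappa := by
        rw [lintegral_const_mul _ ((hmeas t).pow_const 2).ennreal_ofReal,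
          lintegral_Z2 Z hmeas hgauss t]

lemma lintegral_F_lt_top :
    ∫⁻ ω, ∑' t : ℕ, ENNReal.ofReal (g Z t ω) < ∞ := by
  rw [lintegral_F Z hmeas hgauss]
  refine ENNReal.mul_lt_top ?_ ENNReal.ofReal_lt_top
  rw [← ENNReal.ofReal_tsum_of_nonneg (fun t => by positivity) summable_inv_sq]
  exact ENNReal.ofReal_lt_top

lemma ae_summable : ∀ᵐ ω, Summable fun t => g Z t ω := by
  filter_upwards [ae_lt_top (F_measurable Z hmeas) (lintegral_F_lt_top Z hmeas hgauss).ne]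
    with ω hω
  exact (ENNReal.summable_toReal hω.ne).congr fun t => ENNReal.toReal_ofReal (g_nonneg Z t ω)

lemma ae_Z1_ne : ∀ᵐ ω, Z 1 ω ≠ 0 := by
  have h0 : ℙ {ω | Z 1 ω = 0} = 0 := by
    have he : {ω | Z 1 ω = 0} = Z 1 ⁻¹' {0} := rfl
    rw [he, ← Measure.map_apply (hmeas 1) (measurableSet_singleton 0), hgauss 1]
    exact (gaussianReal_absolutelyContinuous 0 one_ne_zero) (Real.volume_singleton)
  rw [ae_iff]
  simpa using h0

lemma D_aesm (m : ℕ) : AEStronglyMeasurable (D Z m) ℙ := by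
  have hD' : Measurable fun ω => (Z 1 ω) ^ 2 / Sm Z m ω
      - (Z 1 ω) ^ 2 / (∑' t : ℕ, ENNReal.ofReal (g Z t ω)).toReal := by
    have h1 : Measurable fun ω => (Z 1 ω) ^ 2 := (hmeas 1).pow_const 2
    have h2 : Measurable (Sm Z m) := Finset.measurable_sum _ fun t _ => measurable_g Z hmeas t
    exact (h1.div h2).sub (h1.div (F_measurable Z hmeas).ennreal_toReal)
  refine hD'.aestronglyMeasurable.congr ?_
  filter_upwards [ae_summable Z hmeas hgauss] with ω hω
  rw [← Sinf_eq_toReal Z ω hω]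
  rfl

lemma D_integrable {m : ℕ} (hm : 1 ≤ m) : Integrable (D Z m) ℙ := by
  refine Integrable.mono' (integrable_const (1:ℝ)) (D_aesm Z hmeas hgauss m) ?_
  refine ae_of_all _ fun ω => ?_
  rw [Real.norm_eq_abs, abs_le]
  exact ⟨by linarith [D_nonneg Z hm ω], D_le_one Z hm ω⟩

omit hgauss in
lemma Te_measurable (m : ℕ) :
    Measurable fun ω => ∑' t : ℕ, ENNReal.ofReal (if m + 1 ≤ t then g Z t ω else 0) := by
  refine Measurable.ennreal_tsum fun t => ?_
  by_cases h : m + 1 ≤ t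
  · simpa [h] using (measurable_g Z hmeas t).ennreal_ofReal
  · simpa [h] using measurable_const

omit hmeas hgauss in
lemma Te_le_F (m : ℕ) (ω : Ω) :
    (∑' t : ℕ, ENNReal.ofReal (if m + 1 ≤ t then g Z t ω else 0))
      ≤ ∑' t : ℕ, ENNReal.ofReal (g Z t ω) := by
  refine ENNReal.tsum_le_tsum fun t => ENNReal.ofReal_le_ofReal ?_
  by_cases h : m + 1 ≤ t <;> simp [h, g_nonneg]

lemma T_integrable (m : ℕ) : Integrable (T Z m) ℙ := by
  refine integrable_toReal_of_lintegral_ne_top (Te_measurable Z hmeas m).aemeasurable ?_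
  refine (lt_of_le_of_lt (lintegral_mono (Te_le_F Z m)) ?_).ne
  exact lintegral_F_lt_top Z hmeas hgauss

lemma T_ae_tail (m : ℕ) : T Z m =ᵐ[ℙ] tail Z m := by
  filter_upwards [ae_summable Z hmeas hgauss] with ω hω
  exact T_eq_tail Z ω hω

lemma tail_integrable (m : ℕ) : Integrable (tail Z m) ℙ :=
  (T_integrable Z hmeas hgauss m).congr (T_ae_tail Z hmeas hgauss m)

lemma integral_tail (m : ℕ) : ∫ ω, tail Z m ω = s m * kappa := by
  rw [← integral_congr_ae (T_ae_tail Z hmeas hgauss m)]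
  unfold T
  rw [integral_toReal (Te_measurable Z hmeas m).aemeasurable ?ae]
  case ae =>
    filter_upwards [ae_lt_top (F_measurable Z hmeas) (lintegral_F_lt_top Z hmeas hgauss).ne]
      with ω hω
    exact lt_of_le_of_lt (Te_le_F Z m ω) hω
  have h1 : ∫⁻ ω, ∑' t : ℕ, ENNReal.ofReal (if m + 1 ≤ t then g Z t ω else 0)
      = ∑' t : ℕ, (if m + 1 ≤ t then ENNReal.ofReal ((t : ℝ) ^ 2)⁻¹ * ENNReal.ofReal kappa
          else 0) := by
    rw [lintegral_tsum fun t => (by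
      by_cases h : m + 1 ≤ t
      · simpa [h] using ((measurable_g Z hmeas t).ennreal_ofReal).aemeasurable
      · simpa [h] using aemeasurable_const (μ := (ℙ : Measure Ω)) (b := (0:ℝ≥0∞)))]
    refine tsum_congr fun t => ?_
    by_cases h : m + 1 ≤ t
    · simp only [h, if_true]
      calc ∫⁻ ω, ENNReal.ofReal (g Z t ω)
          = ∫⁻ ω, ENNReal.ofReal ((t : ℝ) ^ 2)⁻¹ * ENNReal.ofReal ((Z t ω) ^ 2) := by
            refine lintegral_congr fun ω => ?_
            rw [g, ENNReal.ofReal_mul (by positivity)]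
        _ = ENNReal.ofReal ((t : ℝ) ^ 2)⁻¹ * ENNReal.ofReal kappa := by
            rw [lintegral_const_mul _ ((hmeas t).pow_const 2).ennreal_ofReal,
              lintegral_Z2 Z hmeas hgauss t]
    · simp [h]
  rw [h1, ENNReal.tsum_toReal_eq (fun t => by
    by_cases h : m + 1 ≤ t
    · simp only [h, if_true]
      exact ENNReal.mul_ne_top ENNReal.ofReal_ne_top ENNReal.ofReal_ne_top
    · simp [h])]
  unfold s
  rw [← tsum_mul_right]
  refine tsum_congr fun t => ?_
  by_cases h : m + 1 ≤ t
  · simp only [h, if_true, ENNReal.toReal_mul,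
      ENNReal.toReal_ofReal (by positivity : (0:ℝ) ≤ ((t : ℝ) ^ 2)⁻¹),
      ENNReal.toReal_ofReal kappa_nonneg]
  · simp [h]

omit hmeas hgauss in
lemma X_measurable : (∀ t, Measurable (Z t)) → Measurable (X Z) := fun h =>
  (((h 1).pow_const 2).add ((h 2).pow_const 2)).add ((h 3).pow_const 2)

omit hmeas hgauss in
lemma X_nonneg (ω : Ω) : 0 ≤ X Z ω := by unfold X; positivity

omit hmeas hgauss in
lemma W_nonneg (ω : Ω) : 0 ≤ W Z ω := inv_nonneg.mpr (X_nonneg Z ω)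

omit hmeas hgauss in
lemma gaussianPDFReal_le_one (x : ℝ) : gaussianPDFReal 0 1 x ≤ 1 := by
  unfold gaussianPDFReal
  have h1 : (1:ℝ) ≤ Real.sqrt (2 * Real.pi * ((1:ℝ≥0):ℝ)) := by
    rw [Real.one_le_sqrt]
    push_cast
    nlinarith [Real.pi_gt_three]
  have h2 : Real.exp (-(x - 0) ^ 2 / (2 * ((1:ℝ≥0):ℝ))) ≤ 1 := by
    rw [Real.exp_le_one_iff]
    push_cast
    nlinarith [sq_nonneg (x - 0)]
  calc (Real.sqrt (2 * Real.pi * ((1:ℝ≥0):ℝ)))⁻¹ * Real.exp (-(x - 0) ^ 2 / (2 * ((1:ℝ≥0):ℝ)))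
      ≤ 1 * 1 := by
        apply mul_le_mul _ h2 (Real.exp_nonneg _) zero_le_one
        rw [inv_le_one_iff₀]
        right; exact h1
    _ = 1 := by ring

lemma gauss_small {δ : ℝ} (hδ : 0 < δ) (i : ℕ) :
    ℙ {ω | (Z i ω) ^ 2 < δ ^ 2} ≤ ENNReal.ofReal (2 * δ) := by
  have hset : {x : ℝ | x ^ 2 < δ ^ 2} = Set.Ioo (-δ) δ := by
    ext x
    simp only [Set.mem_setOf_eq, Set.mem_Ioo]
    constructor
    · intro h; constructor <;> nlinarith
    · intro h; nlinarith [h.1, h.2]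
  have he : {ω | (Z i ω) ^ 2 < δ ^ 2} = Z i ⁻¹' Set.Ioo (-δ) δ := by
    ext ω
    simp only [Set.mem_setOf_eq, Set.mem_preimage, ← hset, Set.mem_setOf_eq]
  rw [he, ← Measure.map_apply (hmeas i) measurableSet_Ioo, hgauss i,
    gaussianReal_apply _ one_ne_zero]
  calc ∫⁻ x in Set.Ioo (-δ) δ, gaussianPDF 0 1 x
      ≤ ∫⁻ _x in Set.Ioo (-δ) δ, 1 := by
        refine setLIntegral_mono measurable_const fun x _ => ?_
        rw [gaussianPDF, show (1:ℝ≥0∞) = ENNReal.ofReal 1 by simp]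
        exact ENNReal.ofReal_le_ofReal (gaussianPDFReal_le_one x)

    _ = volume (Set.Ioo (-δ) δ) := setLIntegral_one _
    _ = ENNReal.ofReal (2 * δ) := by
        rw [Real.volume_Ioo]
        congr 1
        ring

lemma W_tail_bound (hindep : iIndepFun Z ℙ)
    {t : ℝ} (ht : 1 ≤ t) :
    ℙ {ω | t < W Z ω} ≤ ENNReal.ofReal (8 * t ^ (-(3/2) : ℝ)) := by
  have ht0 : 0 < t := lt_of_lt_of_le one_pos ht
  set δ := Real.sqrt t⁻¹ with hδdef
  have hδ : 0 < δ := Real.sqrt_pos.mpr (inv_pos.mpr ht0)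
  have hδ2 : δ ^ 2 = t⁻¹ := Real.sq_sqrt (inv_nonneg.mpr ht0.le)
  have hsub : {ω | t < W Z ω} ⊆ ⋂ i ∈ ({1, 2, 3} : Finset ℕ),
      (fun j => Z j ⁻¹' {x : ℝ | x ^ 2 < δ ^ 2}) i := by
    intro ω hω
    have h1 : t < (X Z ω)⁻¹ := hω
    have hx : X Z ω < t⁻¹ := by
      by_cases h0 : X Z ω = 0
      · rw [h0, inv_zero] at h1
        exact absurd h1 (by linarith)
      · have hXpos : 0 < X Z ω := lt_of_le_of_ne (X_nonneg Z ω) (Ne.symm h0)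
        calc X Z ω = ((X Z ω)⁻¹)⁻¹ := (inv_inv _).symm
          _ < t⁻¹ := inv_strictAnti₀ ht0 h1
    simp only [Set.mem_iInter, Set.mem_preimage, Set.mem_setOf_eq]
    intro i hi
    rw [hδ2]
    have h2 := sq_nonneg (Z 1 ω); have h3 := sq_nonneg (Z 2 ω); have h4 := sq_nonneg (Z 3 ω)
    fin_cases hi
    · refine lt_of_le_of_lt ?_ hx; unfold X; linarith
    · refine lt_of_le_of_lt ?_ hx; unfold X; linarith
    · refine lt_of_le_of_lt ?_ hx; unfold X; linarith
  refine le_trans (measure_mono hsub) ?_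
  rw [hindep.meas_biInter (S := ({1, 2, 3} : Finset ℕ))
    (fun i _ => ⟨{x : ℝ | x ^ 2 < δ ^ 2},
      measurableSet_lt (measurable_id.pow_const 2) measurable_const, rfl⟩)]
  have hfac : ∀ i : ℕ, ℙ ((fun j => Z j ⁻¹' {x : ℝ | x ^ 2 < δ ^ 2}) i)
      ≤ ENNReal.ofReal (2 * δ) := fun i => by
    have : (fun j => Z j ⁻¹' {x : ℝ | x ^ 2 < δ ^ 2}) i = {ω | (Z i ω) ^ 2 < δ ^ 2} := rfl
    rw [this]
    exact gauss_small Z hmeas hgauss hδ i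
  calc ∏ i ∈ ({1, 2, 3} : Finset ℕ), ℙ ((fun j => Z j ⁻¹' {x : ℝ | x ^ 2 < δ ^ 2}) i)
      ≤ ENNReal.ofReal (2 * δ) * (ENNReal.ofReal (2 * δ) * ENNReal.ofReal (2 * δ)) := by
        rw [Finset.prod_insert (by decide), Finset.prod_insert (by decide),
          Finset.prod_singleton]
        exact mul_le_mul' (hfac 1) (mul_le_mul' (hfac 2) (hfac 3))
    _ = ENNReal.ofReal (8 * t ^ (-(3/2) : ℝ)) := by
        rw [← ENNReal.ofReal_mul (by positivity), ← ENNReal.ofReal_mul (by positivity)]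
        congr 1
        have hd3 : δ ^ (3:ℕ) = t ^ (-(3/2) : ℝ) := by
          rw [hδdef, Real.sqrt_eq_rpow, ← Real.rpow_natCast (t⁻¹ ^ ((1:ℝ)/2)) 3,
            ← Real.rpow_mul (inv_nonneg.mpr ht0.le),
            Real.inv_rpow ht0.le, ← Real.rpow_neg ht0.le]
          norm_num
        rw [← hd3]
        ring

lemma W_integrable (hindep : iIndepFun Z ℙ) :
    Integrable (W Z) ℙ := by
  refine ⟨((X_measurable Z hmeas).inv).aestronglyMeasurable, ?_⟩
  rw [hasFiniteIntegral_def]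
  have h1 : ∫⁻ ω, ‖W Z ω‖ₑ = ∫⁻ ω, ENNReal.ofReal (W Z ω) :=
    lintegral_congr fun ω => Real.enorm_eq_ofReal (W_nonneg Z ω)
  rw [h1, lintegral_eq_lintegral_meas_lt ℙ (ae_of_all _ (W_nonneg Z))
    ((X_measurable Z hmeas).inv).aemeasurable]
  rw [show Set.Ioi (0:ℝ) = Set.Ioc 0 1 ∪ Set.Ioi 1 from (Set.Ioc_union_Ioi_eq_Ioi zero_le_one).symm]
  refine lt_of_le_of_lt (lintegral_union_le _ _ _) ?_
  have hA : ∫⁻ t in Set.Ioc (0:ℝ) 1, ℙ {a | t < W Z a} ≤ 1 := by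
    calc ∫⁻ t in Set.Ioc (0:ℝ) 1, ℙ {a | t < W Z a}
        ≤ ∫⁻ _t in Set.Ioc (0:ℝ) 1, 1 :=
          setLIntegral_mono measurable_const fun x _ => prob_le_one
      _ = volume (Set.Ioc (0:ℝ) 1) := setLIntegral_one _
      _ = 1 := by simp
  have hB : ∫⁻ t in Set.Ioi (1:ℝ), ℙ {a | t < W Z a} < ∞ := by
    have hbound : ∫⁻ t in Set.Ioi (1:ℝ), ℙ {a | t < W Z a}
        ≤ ∫⁻ t in Set.Ioi (1:ℝ), ENNReal.ofReal (8 * t ^ (-(3/2) : ℝ)) := by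
      refine setLIntegral_mono_ae' measurableSet_Ioi (ae_of_all _ fun t ht => ?_)
      exact W_tail_bound Z hmeas hgauss hindep (le_of_lt ht)
    refine lt_of_le_of_lt hbound ?_
    have hint : IntegrableOn (fun t : ℝ => 8 * t ^ (-(3/2) : ℝ)) (Set.Ioi 1) :=
      (integrableOn_Ioi_rpow_of_lt (by norm_num) one_pos).const_mul 8
    rw [← ofReal_integral_eq_lintegral_ofReal hint ?_]
    · exact ENNReal.ofReal_lt_top
    · filter_upwards [self_mem_ae_restrict measurableSet_Ioi] with t ht
      have ht0 : (0:ℝ) < t := lt_trans one_pos ht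
      positivity
  exact lt_of_le_of_lt (add_le_add hA (le_refl _))
    (ENNReal.add_lt_top.mpr ⟨ENNReal.one_lt_top, hB⟩)

lemma one_le_CS (hindep : iIndepFun Z ℙ) :
    1 ≤ 3 * kappa * ∫ ω, W Z ω := by
  have hXint : Integrable (X Z) ℙ :=
    ((Z2_integrable Z hmeas hgauss 1).add (Z2_integrable Z hmeas hgauss 2)).add
      (Z2_integrable Z hmeas hgauss 3)
  have hXval : ∫ ω, X Z ω = 3 * kappa := by
    have h12 : Integrable (fun ω => (Z 1 ω) ^ 2 + (Z 2 ω) ^ 2) ℙ :=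
      (Z2_integrable Z hmeas hgauss 1).add (Z2_integrable Z hmeas hgauss 2)
    unfold X
    rw [integral_add h12 (Z2_integrable Z hmeas hgauss 3),
      integral_add (Z2_integrable Z hmeas hgauss 1) (Z2_integrable Z hmeas hgauss 2),
      integral_Z2 Z hmeas hgauss 1, integral_Z2 Z hmeas hgauss 2, integral_Z2 Z hmeas hgauss 3]
    ring
  have hWint : Integrable (W Z) ℙ := W_integrable Z hmeas hgauss hindep
  have hXW : ∀ᵐ ω ∂(ℙ : Measure Ω),
      ENNReal.ofReal (Real.sqrt (X Z ω)) * ENNReal.ofReal (Real.sqrt (W Z ω)) = 1 := by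
    filter_upwards [ae_Z1_ne Z hmeas hgauss] with ω hω
    have hXpos : 0 < X Z ω := by
      have h1 : 0 < (Z 1 ω) ^ 2 := by positivity
      have h2 := sq_nonneg (Z 2 ω); have h3 := sq_nonneg (Z 3 ω)
      unfold X; linarith
    rw [← ENNReal.ofReal_mul (Real.sqrt_nonneg _), ← Real.sqrt_mul (X_nonneg Z ω)]
    unfold W
    rw [mul_inv_cancel₀ hXpos.ne', Real.sqrt_one, ENNReal.ofReal_one]
  have hconj : Real.HolderConjugate 2 2 := Real.HolderConjugate.two_two
  have hmX : AEMeasurable (fun ω => ENNReal.ofReal (Real.sqrt (X Z ω))) (ℙ : Measure Ω) :=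
    ((Real.continuous_sqrt.measurable.comp (X_measurable Z hmeas)).ennreal_ofReal).aemeasurable
  have hmW : AEMeasurable (fun ω => ENNReal.ofReal (Real.sqrt (W Z ω))) (ℙ : Measure Ω) :=
    ((Real.continuous_sqrt.measurable.comp ((X_measurable Z hmeas).inv)).ennreal_ofReal).aemeasurable
  have hH := ENNReal.lintegral_mul_le_Lp_mul_Lq (ℙ : Measure Ω) hconj hmX hmW
  have hL : ∫⁻ a, ((fun ω => ENNReal.ofReal (Real.sqrt (X Z ω)))
      * fun ω => ENNReal.ofReal (Real.sqrt (W Z ω))) a = 1 := by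
    simp only [Pi.mul_apply]
    rw [lintegral_congr_ae hXW]
    simp
  have hsqX : ∀ ω : Ω, ENNReal.ofReal (Real.sqrt (X Z ω)) ^ (2:ℝ)
      = ENNReal.ofReal (X Z ω) := fun ω => by
    rw [ENNReal.ofReal_rpow_of_nonneg (Real.sqrt_nonneg _) (by norm_num)]
    congr 1
    rw [show ((2:ℝ)) = ((2:ℕ):ℝ) by norm_num, Real.rpow_natCast, Real.sq_sqrt (X_nonneg Z ω)]
  have hsqW : ∀ ω : Ω, ENNReal.ofReal (Real.sqrt (W Z ω)) ^ (2:ℝ)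
      = ENNReal.ofReal (W Z ω) := fun ω => by
    rw [ENNReal.ofReal_rpow_of_nonneg (Real.sqrt_nonneg _) (by norm_num)]
    congr 1
    rw [show ((2:ℝ)) = ((2:ℕ):ℝ) by norm_num, Real.rpow_natCast, Real.sq_sqrt (W_nonneg Z ω)]
  rw [hL] at hH
  simp only [hsqX, hsqW] at hH
  rw [← ofReal_integral_eq_lintegral_ofReal hXint (ae_of_all _ (X_nonneg Z)),
    ← ofReal_integral_eq_lintegral_ofReal hWint (ae_of_all _ (W_nonneg Z))] at hH
  rw [← ENNReal.mul_rpow_of_nonneg _ _ (by norm_num : (0:ℝ) ≤ 1/2)] at hH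
  have h2 : 1 ≤ ENNReal.ofReal (∫ ω, X Z ω) * ENNReal.ofReal (∫ ω, W Z ω) := by
    by_contra hcon
    push_neg at hcon
    have := ENNReal.rpow_lt_one hcon (by norm_num : (0:ℝ) < 1/2)
    exact absurd (lt_of_le_of_lt hH this) (lt_irrefl _)
  rw [← ENNReal.ofReal_mul (integral_nonneg (X_nonneg Z))] at h2
  have h3 := ENNReal.one_le_ofReal.mp h2
  rw [hXval] at h3
  linarith

omit hgauss in
lemma indep_TW (hindep : iIndepFun Z ℙ) {m : ℕ} (hm : 3 ≤ m) :
    IndepFun (T Z m) (W Z) ℙ := by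
  classical
  set S1 : Set ℕ := {i | m + 1 ≤ i} with hS1
  set S2 : Set ℕ := {1, 2, 3} with hS2
  have hdisj : Disjoint S1 S2 := by
    rw [Set.disjoint_left]
    intro i hi1 hi2
    rw [hS1, Set.mem_setOf_eq] at hi1
    rw [hS2] at hi2
    simp only [Set.mem_insert_iff, Set.mem_singleton_iff] at hi2
    omega
  have hIndep : Indep (⨆ i ∈ S1, MeasurableSpace.comap (Z i) inferInstance)
      (⨆ i ∈ S2, MeasurableSpace.comap (Z i) inferInstance) ℙ :=
    indep_iSup_of_disjoint (fun i => (hmeas i).comap_le) hindep.iIndep hdisj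
  have hT : Measurable[⨆ i ∈ S1, MeasurableSpace.comap (Z i) inferInstance] (T Z m) := by
    apply Measurable.ennreal_toReal
    apply Measurable.ennreal_tsum
    intro t
    by_cases h : m + 1 ≤ t
    · have hZ : Measurable[⨆ i ∈ S1, MeasurableSpace.comap (Z i) inferInstance] (Z t) :=
        Measurable.of_comap_le (le_biSup (f := fun i => MeasurableSpace.comap (Z i) inferInstance) (show t ∈ S1 from h))
      have hg' : Measurable[⨆ i ∈ S1, MeasurableSpace.comap (Z i) inferInstance]
          (fun ω => ENNReal.ofReal (g Z t ω)) :=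
        ((hZ.pow_const 2).const_mul _).ennreal_ofReal
      simpa [h] using hg'
    · simpa [h] using measurable_const
  have hW : Measurable[⨆ i ∈ S2, MeasurableSpace.comap (Z i) inferInstance] (W Z) := by
    have h1 : ∀ i, i ∈ S2 → Measurable[⨆ i ∈ S2, MeasurableSpace.comap (Z i) inferInstance]
        (Z i) := fun i hi => Measurable.of_comap_le (le_biSup (f := fun j => MeasurableSpace.comap (Z j) inferInstance) hi)
    have m1 := h1 1 (by rw [hS2]; simp)
    have m2 := h1 2 (by rw [hS2]; simp)
    have m3 := h1 3 (by rw [hS2]; simp)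
    exact (((m1.pow_const 2).add (m2.pow_const 2)).add (m3.pow_const 2)).inv
  exact indep_of_indep_of_le_left (indep_of_indep_of_le_right hIndep hW.comap_le) hT.comap_le

end Measure

end Stmt8Aux

end Stmt8Aux

open Stmt8Aux

/-- For i.i.d. standard normals `Z_t`, with `M = Z₁²/Σ_{t≥1} t⁻²Z_t²` and
`M̃ = Z₁²/Σ_{t=1}^m t⁻²Z_t²`, one has
`0 ≤ E[M̃ - M] ≤ 9·E[Σ_{t>m} t⁻²Z_t²]·E[(Z₁²+Z₂²+Z₃²)⁻¹]`, and in particular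
`E[M̃ - M] ≤ C/m` for an absolute constant `C`. -/
theorem stmt_8 {Ω : Type*} [MeasureSpace Ω] [IsProbabilityMeasure (ℙ : Measure Ω)]
    (Z : ℕ → Ω → ℝ) (hmeas : ∀ t, Measurable (Z t))
    (hindep : iIndepFun Z ℙ)
    (hgauss : ∀ t, Measure.map (Z t) ℙ = gaussianReal 0 1) :
    (∀ m : ℕ, 1 ≤ m →
      0 ≤ ∫ ω, ((Z 1 ω) ^ 2 / ∑ t ∈ Finset.Icc 1 m, ((t : ℝ) ^ 2)⁻¹ * (Z t ω) ^ 2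
          - (Z 1 ω) ^ 2 / ∑' t : ℕ, ((t : ℝ) ^ 2)⁻¹ * (Z t ω) ^ 2) ∧
      ∫ ω, ((Z 1 ω) ^ 2 / ∑ t ∈ Finset.Icc 1 m, ((t : ℝ) ^ 2)⁻¹ * (Z t ω) ^ 2
          - (Z 1 ω) ^ 2 / ∑' t : ℕ, ((t : ℝ) ^ 2)⁻¹ * (Z t ω) ^ 2) ≤
        9 * (∫ ω, ∑' t : ℕ, (if m + 1 ≤ t then ((t : ℝ) ^ 2)⁻¹ * (Z t ω) ^ 2 else 0))
          * ∫ ω, ((Z 1 ω) ^ 2 + (Z 2 ω) ^ 2 + (Z 3 ω) ^ 2)⁻¹) ∧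
    ∃ C : ℝ, 0 < C ∧ ∀ m : ℕ, 1 ≤ m →
      ∫ ω, ((Z 1 ω) ^ 2 / ∑ t ∈ Finset.Icc 1 m, ((t : ℝ) ^ 2)⁻¹ * (Z t ω) ^ 2
          - (Z 1 ω) ^ 2 / ∑' t : ℕ, ((t : ℝ) ^ 2)⁻¹ * (Z t ω) ^ 2) ≤ C / m := by
  classical
  have hB0 : 0 ≤ ∫ ω, W Z ω := integral_nonneg (W_nonneg Z)
  have hCS := one_le_CS Z hmeas hgauss hindep
  have hκ0 : 0 ≤ kappa := kappa_nonneg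
  have main2 : ∀ m : ℕ, 1 ≤ m →
      ∫ ω, D Z m ω ≤ 9 * (∫ ω, tail Z m ω) * ∫ ω, W Z ω := by
    intro m hm
    rcases le_or_gt m 2 with hm2 | hm3
    · have h1 : ∫ ω, D Z m ω ≤ 1 := by
        calc ∫ ω, D Z m ω ≤ ∫ _ω, (1:ℝ) :=
              integral_mono (D_integrable Z hmeas hgauss hm) (integrable_const 1)
                (fun ω => D_le_one Z hm ω)
          _ = 1 := by simp
      have h2 : (1:ℝ) ≤ 9 * (s m * kappa) * ∫ ω, W Z ω := by
        have hs := s_ge hm2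
        have hk : (1/3 : ℝ) * (kappa * ∫ ω, W Z ω) ≤ s m * (kappa * ∫ ω, W Z ω) :=
          mul_le_mul_of_nonneg_right hs (mul_nonneg hκ0 hB0)
        nlinarith [hCS]
      rw [integral_tail Z hmeas hgauss m]
      linarith
    · have hm3' : 3 ≤ m := hm3
      have hTW : IndepFun (T Z m) (W Z) ℙ := indep_TW Z hmeas hindep hm3'
      have hTint := T_integrable Z hmeas hgauss m
      have hWint := W_integrable Z hmeas hgauss hindep
      have hmulint : Integrable (T Z m * W Z) ℙ := hTW.integrable_mul hTint hWint
      have hbound : ∀ᵐ ω ∂(ℙ : Measure Ω), D Z m ω ≤ 9 * (T Z m ω * W Z ω) := by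
        filter_upwards [ae_summable Z hmeas hgauss, ae_Z1_ne Z hmeas hgauss] with ω h1 h2
        rw [T_eq_tail Z ω h1]
        exact key_pointwise Z hm ω h1 h2
      have h3 : ∫ ω, D Z m ω ≤ ∫ ω, 9 * (T Z m ω * W Z ω) := by
        refine integral_mono_ae (D_integrable Z hmeas hgauss hm) ?_ hbound
        exact hmulint.const_mul 9
      have h4 : ∫ ω, 9 * (T Z m ω * W Z ω)
          = 9 * ((∫ ω, T Z m ω) * ∫ ω, W Z ω) := by
        rw [integral_const_mul]
        exact congrArg (fun r => 9 * r) (hTW.integral_mul_eq_mul_integral hTint.1 hWint.1)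
      have h5 : ∫ ω, T Z m ω = ∫ ω, tail Z m ω :=
        integral_congr_ae (T_ae_tail Z hmeas hgauss m)
      rw [h4, h5] at h3
      exact le_trans h3 (le_of_eq (by ring))
  refine ⟨fun m hm => ⟨?_, ?_⟩, ?_⟩
  · exact integral_nonneg fun ω => D_nonneg Z hm ω
  · show ∫ ω, D Z m ω ≤ 9 * (∫ ω, tail Z m ω) * ∫ ω, W Z ω
    exact main2 m hm
  · refine ⟨9 * (kappa * ∫ ω, W Z ω), by nlinarith [hCS], ?_⟩
    intro m hm
    show ∫ ω, D Z m ω ≤ 9 * (kappa * ∫ ω, W Z ω) / m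
    have h1 := main2 m hm
    rw [integral_tail Z hmeas hgauss m] at h1
    have h2 : s m ≤ (m:ℝ)⁻¹ := s_le hm
    have hm0 : (0:ℝ) < m := by exact_mod_cast Nat.pos_of_ne_zero (by omega)
    have h3 : 9 * (s m * kappa) * (∫ ω, W Z ω) ≤ 9 * (kappa * ∫ ω, W Z ω) / m := by
      rw [div_eq_mul_inv]
      have hk := mul_le_mul_of_nonneg_right h2 (mul_nonneg hκ0 hB0)
      nlinarith [hk]
    linarith
end

section
/- Let ε_1, …, ε_n be independent real random variables with E[ε_i]=0, E[ε_i²]=1 and uniformly bounded eighth moments E[ε_i⁸] ≤ κ₈, and let A be a real symmetric n×n matrix. Then E[(ε'Aε - tr A)⁴] ≤ C(κ₈) · ‖A‖_F⁴ for a constant C depending only on κ₈, where ε = (ε_1,…,ε_n)'. -/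
open MeasureTheory ProbabilityTheory Matrix Filter
open scoped ENNReal ProbabilityTheory


lemma pw_cube_mul (a b : ℝ) : |a ^ 3 * b| ≤ a ^ 4 + b ^ 4 := by
  have h := abs_nonneg a
  have h2 := abs_nonneg b
  have e : |a ^ 3 * b| = |a| ^ 3 * |b| := by rw [abs_mul, abs_pow]
  rw [e]
  nlinarith [sq_nonneg (|a| ^ 2 - |a| * |b|), sq_nonneg (|a| * |b| - |b| ^ 2),
    sq_nonneg (|a| - |b|), sq_nonneg (|a| + |b|), mul_nonneg h h2, sq_abs a, sq_abs b]

lemma pw_sq_sq (a b : ℝ) : a ^ 2 * b ^ 2 ≤ a ^ 4 + b ^ 4 := by nlinarith [sq_nonneg (a ^ 2 - b ^ 2)]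

lemma pw_abs_mul (a b : ℝ) : |a * b| ≤ a ^ 2 + b ^ 2 := by
  rw [abs_mul]
  nlinarith [sq_nonneg (|a| - |b|), sq_abs a, sq_abs b, abs_nonneg a, abs_nonneg b]

lemma pw_add_pow4 (a b : ℝ) : (a + b) ^ 4 ≤ 8 * a ^ 4 + 8 * b ^ 4 := by
  have h1 : (a + b) ^ 2 ≤ 2 * a ^ 2 + 2 * b ^ 2 := by nlinarith [sq_nonneg (a - b)]
  have h2 : (a + b) ^ 4 = ((a + b) ^ 2) ^ 2 := by ring
  rw [h2]
  have h3 : ((a + b) ^ 2) ^ 2 ≤ (2 * a ^ 2 + 2 * b ^ 2) ^ 2 := by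
    have := sq_nonneg (a + b); nlinarith
  nlinarith [sq_nonneg (a ^ 2 - b ^ 2)]

/-- Cauchy–Schwarz for integrals. -/
lemma aux_cs {α : Type*} {m : MeasurableSpace α} {μ : Measure α} [IsFiniteMeasure μ]
    {u v : α → ℝ} (hum : AEStronglyMeasurable u μ) (hvm : AEStronglyMeasurable v μ)
    (hu2 : Integrable (fun ω => u ω ^ 2) μ) (hv2 : Integrable (fun ω => v ω ^ 2) μ) :
    ∫ ω, |u ω * v ω| ∂μ ≤ Real.sqrt (∫ ω, u ω ^ 2 ∂μ) * Real.sqrt (∫ ω, v ω ^ 2 ∂μ) := by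
  set X := ∫ ω, u ω ^ 2 ∂μ with hX
  set Y := ∫ ω, v ω ^ 2 ∂μ with hY
  have hX0 : 0 ≤ X := integral_nonneg fun ω => sq_nonneg _
  have hY0 : 0 ≤ Y := integral_nonneg fun ω => sq_nonneg _
  have huv : Integrable (fun ω => |u ω * v ω|) μ := by
    refine (hu2.add hv2).mono' ((hum.mul hvm).norm) ?_
    filter_upwards with ω
    simpa [abs_abs] using pw_abs_mul (u ω) (v ω)
  have key : ∀ δ : ℝ, 0 < δ → ∫ ω, |u ω * v ω| ∂μ ≤ Real.sqrt (X + δ) * Real.sqrt (Y + δ) := by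
    intro δ hδ
    have hXδ : 0 < X + δ := by linarith
    have hYδ : 0 < Y + δ := by linarith
    set t : ℝ := Real.sqrt (Y + δ) / Real.sqrt (X + δ) with ht
    have htpos : 0 < t := div_pos (Real.sqrt_pos.2 hYδ) (Real.sqrt_pos.2 hXδ)
    have hpt : ∀ ω, |u ω * v ω| ≤ (t * u ω ^ 2 + v ω ^ 2 / t) / 2 := by
      intro ω
      have h2 : 2 * t * |u ω * v ω| ≤ t ^ 2 * u ω ^ 2 + v ω ^ 2 := by
        rw [abs_mul]
        nlinarith [sq_nonneg (t * |u ω| - |v ω|), sq_abs (u ω), sq_abs (v ω)]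
      have e : (t * u ω ^ 2 + v ω ^ 2 / t) / 2 = (t ^ 2 * u ω ^ 2 + v ω ^ 2) / (2 * t) := by
        field_simp
      rw [e, le_div_iff₀ (by positivity)]
      linear_combination h2
    have hint : ∫ ω, |u ω * v ω| ∂μ ≤ (t * X + Y / t) / 2 := by
      have heq : ∫ ω, (t * u ω ^ 2 + v ω ^ 2 / t) / 2 ∂μ = (t * X + Y / t) / 2 := by
        rw [integral_div, integral_add (hu2.const_mul t) (hv2.div_const t),
          integral_const_mul, integral_div]
      rw [← heq]
      exact integral_mono huv (((hu2.const_mul t).add (hv2.div_const t)).div_const 2) hpt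
    refine hint.trans ?_
    have e1 : t * (X + δ) = Real.sqrt (X + δ) * Real.sqrt (Y + δ) := by
      rw [ht, div_mul_eq_mul_div, mul_div_assoc, Real.div_sqrt, mul_comm]
    have e2 : (Y + δ) / t = Real.sqrt (X + δ) * Real.sqrt (Y + δ) := by
      rw [ht, div_div_eq_mul_div, mul_comm (Y + δ), mul_div_assoc, Real.div_sqrt]
    have l1 : t * X ≤ Real.sqrt (X + δ) * Real.sqrt (Y + δ) := by
      nlinarith [mul_nonneg htpos.le hδ.le]
    have l2 : Y / t ≤ Real.sqrt (X + δ) * Real.sqrt (Y + δ) := by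
      rw [← e2]; gcongr; linarith
    linarith
  have hcont : Tendsto (fun δ : ℝ => Real.sqrt (X + δ) * Real.sqrt (Y + δ))
      (nhdsWithin 0 (Set.Ioi 0)) (nhds (Real.sqrt X * Real.sqrt Y)) := by
    have hc : Continuous fun δ : ℝ => Real.sqrt (X + δ) * Real.sqrt (Y + δ) :=
      (Real.continuous_sqrt.comp (continuous_const.add continuous_id)).mul
        (Real.continuous_sqrt.comp (continuous_const.add continuous_id))
    have := hc.tendsto 0
    simpa using this.mono_left nhdsWithin_le_nhds
  exact ge_of_tendsto hcont (eventually_nhdsWithin_of_forall fun δ hδ => key δ hδ)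

set_option maxHeartbeats 1000000 in
/-- 2-smoothness-type inequality for fourth moments. -/
lemma aux_lemA {α : Type*} {m : MeasurableSpace α} {μ : Measure α} [IsFiniteMeasure μ]
    {f g : α → ℝ} (hfm : AEStronglyMeasurable f μ) (hgm : AEStronglyMeasurable g μ)
    (hf4 : Integrable (fun ω => f ω ^ 4) μ) (hg4 : Integrable (fun ω => g ω ^ 4) μ)
    (h0 : ∫ ω, f ω ^ 3 * g ω ∂μ = 0) :
    ∫ ω, (f ω + g ω) ^ 4 ∂μ ≤
      (Real.sqrt (∫ ω, f ω ^ 4 ∂μ) + 4 * Real.sqrt (∫ ω, g ω ^ 4 ∂μ)) ^ 2 := by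
  set x := Real.sqrt (∫ ω, f ω ^ 4 ∂μ) with hx
  set y := Real.sqrt (∫ ω, g ω ^ 4 ∂μ) with hy
  have hx0 : 0 ≤ x := Real.sqrt_nonneg _
  have hy0 : 0 ≤ y := Real.sqrt_nonneg _
  have hIf4 : 0 ≤ ∫ ω, f ω ^ 4 ∂μ := integral_nonneg fun ω => by positivity
  have hIg4 : 0 ≤ ∫ ω, g ω ^ 4 ∂μ := integral_nonneg fun ω => by positivity
  have hxe : ∫ ω, f ω ^ 4 ∂μ = x ^ 2 := (Real.sq_sqrt hIf4).symm
  have hye : ∫ ω, g ω ^ 4 ∂μ = y ^ 2 := (Real.sq_sqrt hIg4).symm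
  -- integrability of cross terms
  have hdom : Integrable (fun ω => f ω ^ 4 + g ω ^ 4) μ := hf4.add hg4
  have hi3 : Integrable (fun ω => f ω ^ 3 * g ω) μ := by
    refine hdom.mono' ((hfm.pow 3).mul hgm) ?_
    filter_upwards with ω
    rw [Real.norm_eq_abs]; exact pw_cube_mul (f ω) (g ω)
  have hi2 : Integrable (fun ω => f ω ^ 2 * g ω ^ 2) μ := by
    refine hdom.mono' ((hfm.pow 2).mul (hgm.pow 2)) ?_
    filter_upwards with ω
    have h1 := pw_sq_sq (f ω) (g ω)
    have h2 : |f ω ^ 2 * g ω ^ 2| = f ω ^ 2 * g ω ^ 2 := abs_of_nonneg (by positivity)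
    simp only [Real.norm_eq_abs, h2]; exact h1
  have hi1 : Integrable (fun ω => f ω * g ω ^ 3) μ := by
    refine hdom.mono' (hfm.mul (hgm.pow 3)) ?_
    filter_upwards with ω
    have := pw_cube_mul (g ω) (f ω)
    simp only [Real.norm_eq_abs]
    calc |f ω * g ω ^ 3| = |g ω ^ 3 * f ω| := by rw [mul_comm]
    _ ≤ g ω ^ 4 + f ω ^ 4 := this
    _ = f ω ^ 4 + g ω ^ 4 := by ring
  -- expansion
  have hexp : ∫ ω, (f ω + g ω) ^ 4 ∂μ = ∫ ω, f ω ^ 4 ∂μ + (4 * ∫ ω, f ω ^ 3 * g ω ∂μ)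
      + (6 * ∫ ω, f ω ^ 2 * g ω ^ 2 ∂μ) + (4 * ∫ ω, f ω * g ω ^ 3 ∂μ) + ∫ ω, g ω ^ 4 ∂μ := by
    have e : (fun ω => (f ω + g ω) ^ 4) = fun ω =>
        f ω ^ 4 + (4 * (f ω ^ 3 * g ω) + (6 * (f ω ^ 2 * g ω ^ 2)
          + (4 * (f ω * g ω ^ 3) + g ω ^ 4))) := by
      funext ω; ring
    rw [e, integral_add hf4, integral_add (hi3.const_mul 4), integral_add (hi2.const_mul 6),
      integral_add (hi1.const_mul 4) hg4, integral_const_mul, integral_const_mul,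
      integral_const_mul]
    · ring
    · exact (hi1.const_mul 4).add hg4
    · exact (hi2.const_mul 6).add ((hi1.const_mul 4).add hg4)
    · exact (hi3.const_mul 4).add ((hi2.const_mul 6).add ((hi1.const_mul 4).add hg4))
  have hf22 : Integrable (fun ω => (f ω ^ 2) ^ 2) μ := by
    have e : (fun ω => (f ω ^ 2) ^ 2) = (fun ω => f ω ^ 4) := by funext ω; ring
    rw [e]; exact hf4
  have hg22 : Integrable (fun ω => (g ω ^ 2) ^ 2) μ := by
    have e : (fun ω => (g ω ^ 2) ^ 2) = (fun ω => g ω ^ 4) := by funext ω; ring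
    rw [e]; exact hg4
  have hfg2 : Integrable (fun ω => (f ω * g ω) ^ 2) μ := by
    have e : (fun ω => (f ω * g ω) ^ 2) = (fun ω => f ω ^ 2 * g ω ^ 2) := by funext ω; ring
    rw [e]; exact hi2
  -- bounds on cross terms
  have ef : (fun ω => (f ω ^ 2) ^ 2) = (fun ω => f ω ^ 4) := funext fun ω => by ring
  have eg : (fun ω => (g ω ^ 2) ^ 2) = (fun ω => g ω ^ 4) := funext fun ω => by ring
  have efg : (fun ω => (f ω * g ω) ^ 2) = (fun ω => f ω ^ 2 * g ω ^ 2) := funext fun ω => by ring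
  have hb2 : ∫ ω, f ω ^ 2 * g ω ^ 2 ∂μ ≤ x * y := by
    have h : ∫ ω, |f ω ^ 2 * g ω ^ 2| ∂μ ≤
        Real.sqrt (∫ ω, (f ω ^ 2) ^ 2 ∂μ) * Real.sqrt (∫ ω, (g ω ^ 2) ^ 2 ∂μ) :=
      aux_cs (μ := μ) (u := fun ω => f ω ^ 2) (v := fun ω => g ω ^ 2)
        (hfm.pow 2) (hgm.pow 2) hf22 hg22
    rw [show (fun ω => |f ω ^ 2 * g ω ^ 2|) = (fun ω => f ω ^ 2 * g ω ^ 2) from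
        funext fun ω => abs_of_nonneg (by positivity), ef, eg, ← hx, ← hy] at h
    exact h
  have hb1 : ∫ ω, f ω * g ω ^ 3 ∂μ ≤ Real.sqrt (x * y) * y := by
    have hcs : ∫ ω, |f ω * g ω * g ω ^ 2| ∂μ ≤
        Real.sqrt (∫ ω, (f ω * g ω) ^ 2 ∂μ) * Real.sqrt (∫ ω, (g ω ^ 2) ^ 2 ∂μ) :=
      aux_cs (μ := μ) (u := fun ω => f ω * g ω) (v := fun ω => g ω ^ 2)
        (hfm.mul hgm) (hgm.pow 2) hfg2 hg22
    rw [efg, eg, ← hy] at hcs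
    have h1 : ∫ ω, f ω * g ω ^ 3 ∂μ ≤ ∫ ω, |f ω * g ω * g ω ^ 2| ∂μ := by
      refine integral_mono hi1 ?_ ?_
      · refine hdom.mono' ((((hfm.mul hgm)).mul (hgm.pow 2)).norm) ?_
        filter_upwards with ω
        rw [Real.norm_eq_abs, abs_abs,
          show f ω * g ω * g ω ^ 2 = f ω * g ω ^ 3 by ring]
        calc |f ω * g ω ^ 3| = |g ω ^ 3 * f ω| := by rw [mul_comm]
        _ ≤ g ω ^ 4 + f ω ^ 4 := pw_cube_mul (g ω) (f ω)
        _ = f ω ^ 4 + g ω ^ 4 := by ring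
      · intro ω
        calc f ω * g ω ^ 3 = f ω * g ω * g ω ^ 2 := by ring
        _ ≤ |f ω * g ω * g ω ^ 2| := le_abs_self _
    have h2 : Real.sqrt (∫ ω, f ω ^ 2 * g ω ^ 2 ∂μ) ≤ Real.sqrt (x * y) :=
      Real.sqrt_le_sqrt hb2
    calc ∫ ω, f ω * g ω ^ 3 ∂μ ≤ ∫ ω, |f ω * g ω * g ω ^ 2| ∂μ := h1
    _ ≤ Real.sqrt (∫ ω, f ω ^ 2 * g ω ^ 2 ∂μ) * y := hcs
    _ ≤ Real.sqrt (x * y) * y := mul_le_mul_of_nonneg_right h2 hy0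
  -- conclude
  rw [hexp, h0, hxe, hye]
  have hs : Real.sqrt (x * y) ^ 2 = x * y := Real.sq_sqrt (mul_nonneg hx0 hy0)
  nlinarith [Real.sqrt_nonneg (x * y), sq_nonneg (Real.sqrt (x * y) - y), hb1, hb2]


noncomputable def Zq {Ω : Type} {n : ℕ} (A : Matrix (Fin n) (Fin n) ℝ) (ε : Fin n → Ω → ℝ)
    (s : Finset (Fin n)) (ω : Ω) : ℝ :=
  (∑ u ∈ s, ∑ t ∈ s, A u t * ε u ω * ε t ω) - ∑ u ∈ s, A u u

noncomputable def Sl {Ω : Type} {n : ℕ} (A : Matrix (Fin n) (Fin n) ℝ) (ε : Fin n → Ω → ℝ)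
    (j : Fin n) (s : Finset (Fin n)) (ω : Ω) : ℝ :=
  ∑ t ∈ s, A j t * ε t ω

lemma Zq_meas {Ω : Type} [MeasureSpace Ω] {n : ℕ} {ε : Fin n → Ω → ℝ}
    (hmeas : ∀ i, Measurable (ε i)) (A : Matrix (Fin n) (Fin n) ℝ) (s : Finset (Fin n)) :
    Measurable (Zq A ε s) := by
  unfold Zq
  exact (Finset.measurable_sum s fun u _ => Finset.measurable_sum s fun t _ =>
    (((hmeas u).const_mul (A u t)).mul (hmeas t))).sub measurable_const

lemma Sl_meas {Ω : Type} [MeasureSpace Ω] {n : ℕ} {ε : Fin n → Ω → ℝ}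
    (hmeas : ∀ i, Measurable (ε i)) (A : Matrix (Fin n) (Fin n) ℝ) (j : Fin n)
    (s : Finset (Fin n)) : Measurable (Sl A ε j s) := by
  unfold Sl
  exact Finset.measurable_sum s fun t _ => ((hmeas t).const_mul (A j t))

lemma indep_helper {Ω : Type} [MeasureSpace Ω] {n : ℕ} {ε : Fin n → Ω → ℝ}
    (hmeas : ∀ i, Measurable (ε i)) (hind : iIndepFun ε ℙ)
    (A : Matrix (Fin n) (Fin n) ℝ) (s : Finset (Fin n)) (j' j : Fin n) (hj : j ∉ s)
    (H : ℝ × ℝ → ℝ) (G : ℝ → ℝ) (hH : Measurable H) (hG : Measurable G) :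
    IndepFun (fun ω => H (Zq A ε s ω, Sl A ε j' s ω)) (fun ω => G (ε j ω)) ℙ := by
  have hdisj : Disjoint s ({j} : Finset (Fin n)) := Finset.disjoint_singleton_right.mpr hj
  have hbase := hind.indepFun_finset s {j} hdisj hmeas
  set F : ({x // x ∈ s} → ℝ) → ℝ := fun v =>
    H ((∑ u ∈ s.attach, ∑ t ∈ s.attach, A u t * v u * v t) - ∑ u ∈ s.attach, A (↑u) (↑u),
       ∑ t ∈ s.attach, A j' t * v t) with hF
  have hFmeas : Measurable F := by
    apply hH.comp
    apply Measurable.prodMk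
    · refine Measurable.sub ?_ measurable_const
      refine Finset.measurable_sum _ fun u _ => Finset.measurable_sum _ fun t _ => ?_
      exact (((measurable_pi_apply (X := fun _ : {x // x ∈ s} => ℝ) u)).const_mul
        (A (↑u) (↑t))).mul (measurable_pi_apply (X := fun _ : {x // x ∈ s} => ℝ) t)
    · exact Finset.measurable_sum _ fun t _ =>
        ((measurable_pi_apply (X := fun _ : {x // x ∈ s} => ℝ) t).const_mul (A j' (↑t)))
  have hGmeas : Measurable (fun v : ({x // x ∈ ({j} : Finset (Fin n))} → ℝ) =>
      G (v ⟨j, Finset.mem_singleton_self j⟩)) := hG.comp (measurable_pi_apply _)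
  have h := hbase.comp hFmeas hGmeas
  have e1 : (F ∘ fun a (i : {x // x ∈ s}) => ε (↑i) a)
      = fun ω => H (Zq A ε s ω, Sl A ε j' s ω) := by
    funext ω
    simp only [Function.comp_apply, hF, Zq, Sl]
    have h1 : ∀ u : Fin n, (∑ t ∈ s.attach, A u (↑t) * ε u ω * ε (↑t) ω)
        = ∑ t ∈ s, A u t * ε u ω * ε t ω := fun u =>
      Finset.sum_attach s (fun t => A u t * ε u ω * ε t ω)
    have h2 : (∑ u ∈ s.attach, ∑ t ∈ s.attach, A (↑u) (↑t) * ε (↑u) ω * ε (↑t) ω)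
        = ∑ u ∈ s, ∑ t ∈ s, A u t * ε u ω * ε t ω := by
      rw [← Finset.sum_attach s (fun u => ∑ t ∈ s, A u t * ε u ω * ε t ω)]
      exact Finset.sum_congr rfl fun u _ => h1 (↑u)
    rw [h2, Finset.sum_attach s (fun u => A u u), Finset.sum_attach s (fun t => A j' t * ε t ω)]
  have e2 : ((fun v : ({x // x ∈ ({j} : Finset (Fin n))} → ℝ) =>
      G (v ⟨j, Finset.mem_singleton_self j⟩)) ∘ fun a (i : {x // x ∈ ({j} : Finset (Fin n))}) =>
        ε (↑i) a) = fun ω => G (ε j ω) := rfl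
  rw [e1, e2] at h
  exact h

lemma indep_mul {Ω : Type} [MeasureSpace Ω] {n : ℕ} {ε : Fin n → Ω → ℝ}
    (hmeas : ∀ i, Measurable (ε i)) (hind : iIndepFun ε ℙ)
    (A : Matrix (Fin n) (Fin n) ℝ) (s : Finset (Fin n)) (j' j : Fin n) (hj : j ∉ s)
    (H : ℝ × ℝ → ℝ) (G : ℝ → ℝ) (hH : Measurable H) (hG : Measurable G) :
    ∫ ω, H (Zq A ε s ω, Sl A ε j' s ω) * G (ε j ω) =
      (∫ ω, H (Zq A ε s ω, Sl A ε j' s ω)) * ∫ ω, G (ε j ω) := by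
  have h := indep_helper hmeas hind A s j' j hj H G hH hG
  exact h.integral_fun_mul_eq_mul_integral
    ((hH.comp ((Zq_meas hmeas A s).prodMk (Sl_meas hmeas A j' s))).aestronglyMeasurable)
    ((hG.comp (hmeas j)).aestronglyMeasurable)

set_option maxHeartbeats 2000000 in
theorem main_aux {Ω : Type} [MeasureSpace Ω] (hP : IsProbabilityMeasure (ℙ : Measure Ω))
    {n : ℕ} (ε : Fin n → Ω → ℝ) (A : Matrix (Fin n) (Fin n) ℝ) (B : ℝ) (hB : 1 ≤ B)
    (hA : A.IsSymm) (hmeas : ∀ i, Measurable (ε i))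
    (hind : iIndepFun ε ℙ)
    (h8 : ∀ i, Integrable (fun ω => ε i ω ^ 8) ℙ)
    (hm1 : ∀ i, ∫ ω, ε i ω = 0) (hm2 : ∀ i, ∫ ω, ε i ω ^ 2 = 1)
    (hm8 : ∀ i, ∫ ω, ε i ω ^ 8 ≤ B) :
    ∀ s : Finset (Fin n), Integrable (fun ω => Zq A ε s ω ^ 4) ℙ ∧
      Real.sqrt (∫ ω, Zq A ε s ω ^ 4) ≤ 184 * (B + 1) * ∑ u ∈ s, ∑ t ∈ s, A u t ^ 2 := by
  haveI := hP
  have hB1 : (0:ℝ) ≤ B + 1 := by linarith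
  have hsym : ∀ u v, A u v = A v u := fun u v => (hA.apply u v).symm
  -- basic moment consequences
  have hε4 : ∀ i, Integrable (fun ω => ε i ω ^ 4) ℙ := by
    intro i
    refine ((integrable_const (1:ℝ)).add (h8 i)).mono'
      ((hmeas i).pow_const 4).aestronglyMeasurable ?_
    filter_upwards with ω
    rw [Real.norm_eq_abs, abs_of_nonneg (by positivity)]
    simp only [Pi.add_apply]
    nlinarith [sq_nonneg (ε i ω ^ 4 - 1), sq_nonneg (ε i ω ^ 2)]
  have hε2 : ∀ i, Integrable (fun ω => ε i ω ^ 2) ℙ := by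
    intro i
    refine ((integrable_const (1:ℝ)).add (h8 i)).mono'
      ((hmeas i).pow_const 2).aestronglyMeasurable ?_
    filter_upwards with ω
    rw [Real.norm_eq_abs, abs_of_nonneg (by positivity)]
    simp only [Pi.add_apply]
    rcases le_total (ε i ω ^ 2) 1 with h | h
    · nlinarith [pow_nonneg (sq_nonneg (ε i ω)) 4]
    · nlinarith [le_self_pow₀ h (by norm_num : (4:ℕ) ≠ 0)]
  have hε4b : ∀ i, ∫ ω, ε i ω ^ 4 ≤ B + 1 := by
    intro i
    have h1 : ∫ ω, ε i ω ^ 4 ≤ ∫ ω, (1 + ε i ω ^ 8) := by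
      refine integral_mono (hε4 i) ((integrable_const 1).add (h8 i)) fun ω => ?_
      nlinarith [sq_nonneg (ε i ω ^ 4 - 1), sq_nonneg (ε i ω ^ 2)]
    have h2 : ∫ ω, (1 + ε i ω ^ 8 : ℝ) = 1 + ∫ ω, ε i ω ^ 8 := by
      rw [integral_add (integrable_const 1) (h8 i), integral_const]
      simp
    rw [h2] at h1
    linarith [hm8 i]
  have hU0 : ∀ i, ∫ ω, (ε i ω ^ 2 - 1) = 0 := by
    intro i
    rw [integral_sub (hε2 i) (integrable_const 1), hm2 i, integral_const]
    simp
  have hU4 : ∀ i, Integrable (fun ω => (ε i ω ^ 2 - 1) ^ 4) ℙ := by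
    intro i
    refine ((h8 i).const_mul 8 |>.add (integrable_const 8)).mono'
      ((((hmeas i).pow_const 2).sub measurable_const).pow_const 4).aestronglyMeasurable ?_
    filter_upwards with ω
    rw [Real.norm_eq_abs, abs_of_nonneg (by positivity)]
    simp only [Pi.add_apply]
    have := pw_add_pow4 (ε i ω ^ 2) (-1)
    nlinarith [this]
  have hU4b : ∀ i, ∫ ω, (ε i ω ^ 2 - 1) ^ 4 ≤ 8 * (B + 1) := by
    intro i
    have h1 : ∫ ω, (ε i ω ^ 2 - 1) ^ 4 ≤ ∫ ω, (8 * ε i ω ^ 8 + 8) := by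
      refine integral_mono (hU4 i) (((h8 i).const_mul 8).add (integrable_const 8)) fun ω => ?_
      have := pw_add_pow4 (ε i ω ^ 2) (-1)
      nlinarith [this]
    have h2 : ∫ ω, (8 * ε i ω ^ 8 + 8 : ℝ) = 8 * (∫ ω, ε i ω ^ 8) + 8 := by
      rw [integral_add ((h8 i).const_mul 8) (integrable_const 8), integral_const_mul,
        integral_const]
      simp
    rw [h2] at h1
    linarith [hm8 i]
  -- the linear-form lemma
  have lin : ∀ (j' : Fin n) (s : Finset (Fin n)),
      Integrable (fun ω => Sl A ε j' s ω ^ 4) ℙ ∧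
      Real.sqrt (∫ ω, Sl A ε j' s ω ^ 4) ≤ 4 * Real.sqrt (B + 1) * ∑ t ∈ s, A j' t ^ 2 := by
    intro j' s
    induction s using Finset.induction_on with
    | empty =>
        have e : (fun ω => Sl A ε j' (∅ : Finset (Fin n)) ω ^ 4) = fun _ => (0:ℝ) := by
          funext ω; simp [Sl]
        constructor
        · rw [e]; exact integrable_const 0
        · rw [e]
          simp
    | @insert j s hj ih =>
        have hdec : Sl A ε j' (insert j s) = fun ω => Sl A ε j' s ω + A j' j * ε j ω := by
          funext ω; rw [Sl, Finset.sum_insert hj]; rw [Sl]; ring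
        have hg4 : Integrable (fun ω => (A j' j * ε j ω) ^ 4) ℙ := by
          have e : (fun ω => (A j' j * ε j ω) ^ 4) = fun ω => (A j' j) ^ 4 * ε j ω ^ 4 :=
            funext fun ω => by ring
          rw [e]; exact (hε4 j).const_mul _
        have h0 : ∫ ω, Sl A ε j' s ω ^ 3 * (A j' j * ε j ω) = 0 := by
          have e : (fun ω => Sl A ε j' s ω ^ 3 * (A j' j * ε j ω))
              = fun ω => A j' j * (Sl A ε j' s ω ^ 3 * ε j ω) := funext fun ω => by ring
          rw [e, integral_const_mul]
          have h2 : ∫ ω, Sl A ε j' s ω ^ 3 * ε j ω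
              = (∫ ω, Sl A ε j' s ω ^ 3) * ∫ ω, ε j ω :=
            indep_mul hmeas hind A s j' j hj (fun p => p.2 ^ 3) id
              (measurable_snd.pow_const 3) measurable_id
          rw [h2, hm1 j, mul_zero, mul_zero]
        have happ := aux_lemA (μ := (ℙ : Measure Ω))
          (f := Sl A ε j' s) (g := fun ω => A j' j * ε j ω)
          (Sl_meas hmeas A j' s).aestronglyMeasurable
          ((hmeas j).const_mul _).aestronglyMeasurable ih.1 hg4 h0
        have hg4b : ∫ ω, (A j' j * ε j ω) ^ 4 ≤ (A j' j) ^ 4 * (B + 1) := by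
          have e : (fun ω => (A j' j * ε j ω) ^ 4) = fun ω => (A j' j) ^ 4 * ε j ω ^ 4 :=
            funext fun ω => by ring
          rw [e, integral_const_mul]
          exact mul_le_mul_of_nonneg_left (hε4b j) (by positivity)
        have hgs : Real.sqrt (∫ ω, (A j' j * ε j ω) ^ 4) ≤ (A j' j) ^ 2 * Real.sqrt (B + 1) := by
          have h1 : Real.sqrt ((A j' j) ^ 4 * (B + 1)) = (A j' j) ^ 2 * Real.sqrt (B + 1) := by
            rw [Real.sqrt_mul (by positivity), show (A j' j) ^ 4 = ((A j' j) ^ 2) ^ 2 by ring,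
              Real.sqrt_sq (by positivity)]
          exact (Real.sqrt_le_sqrt hg4b).trans h1.le
        constructor
        · rw [hdec]
          refine ((ih.1.const_mul 8).add (hg4.const_mul 8)).mono'
            (((Sl_meas hmeas A j' s).add ((hmeas j).const_mul _)).pow_const 4).aestronglyMeasurable ?_
          filter_upwards with ω
          rw [Real.norm_eq_abs, abs_of_nonneg (by positivity)]
          exact pw_add_pow4 _ _
        · rw [hdec]
          have hint4 : (0:ℝ) ≤ ∫ ω, Sl A ε j' s ω ^ 4 := integral_nonneg fun ω => by positivity
          have hintg : (0:ℝ) ≤ ∫ ω, (A j' j * ε j ω) ^ 4 := integral_nonneg fun ω => by positivity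
          calc Real.sqrt (∫ ω, (Sl A ε j' s ω + A j' j * ε j ω) ^ 4)
              ≤ Real.sqrt ((Real.sqrt (∫ ω, Sl A ε j' s ω ^ 4)
                + 4 * Real.sqrt (∫ ω, (A j' j * ε j ω) ^ 4)) ^ 2) := Real.sqrt_le_sqrt happ
          _ = Real.sqrt (∫ ω, Sl A ε j' s ω ^ 4)
                + 4 * Real.sqrt (∫ ω, (A j' j * ε j ω) ^ 4) := by
              exact Real.sqrt_sq (by positivity)
          _ ≤ (4 * Real.sqrt (B + 1) * ∑ t ∈ s, A j' t ^ 2)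
                + 4 * ((A j' j) ^ 2 * Real.sqrt (B + 1)) := by
              have := ih.2
              have := hgs
              gcongr
          _ = 4 * Real.sqrt (B + 1) * ((∑ t ∈ s, A j' t ^ 2) + A j' j ^ 2) := by ring
          _ = 4 * Real.sqrt (B + 1) * ∑ t ∈ insert j s, A j' t ^ 2 := by
              rw [Finset.sum_insert hj]; ring
  -- main induction
  intro s
  induction s using Finset.induction_on with
  | empty =>
      have e : (fun ω => Zq A ε (∅ : Finset (Fin n)) ω ^ 4) = fun _ => (0:ℝ) := by
        funext ω; simp [Zq]
      constructor
      · rw [e]; exact integrable_const 0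
      · rw [e]; simp
  | @insert j s hj ih =>
      set r : ℝ := ∑ t ∈ s, A j t ^ 2 with hr
      have hr0 : 0 ≤ r := Finset.sum_nonneg fun t _ => by positivity
      set D : Ω → ℝ := fun ω => A j j * (ε j ω ^ 2 - 1) + 2 * ε j ω * Sl A ε j s ω with hD
      have hDmeas : Measurable D := by
        rw [hD]
        exact ((((hmeas j).pow_const 2).sub measurable_const).const_mul _).add
          (((hmeas j).const_mul 2).mul (Sl_meas hmeas A j s))
      -- decomposition
      have hdec : Zq A ε (insert j s) = fun ω => Zq A ε s ω + D ω := by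
        funext ω
        simp only [Zq, Sl, hD, Finset.sum_insert hj]
        rw [Finset.sum_add_distrib]
        have e1 : ∑ u ∈ s, A u j * ε u ω * ε j ω = ε j ω * ∑ t ∈ s, A j t * ε t ω := by
          rw [Finset.mul_sum]
          exact Finset.sum_congr rfl fun u _ => by rw [hsym u j]; ring
        have e2 : ∑ t ∈ s, A j t * ε j ω * ε t ω = ε j ω * ∑ t ∈ s, A j t * ε t ω := by
          rw [Finset.mul_sum]
          exact Finset.sum_congr rfl fun u _ => by ring
        rw [e1, e2]
        ring
      -- integrability of pieces
      have hSe4int : Integrable (fun ω => Sl A ε j s ω ^ 4 * ε j ω ^ 4) ℙ := by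
        have hident : IndepFun (fun ω => Sl A ε j s ω ^ 4) (fun ω => ε j ω ^ 4) ℙ :=
          indep_helper hmeas hind A s j j hj (fun p => p.2 ^ 4) (fun x => x ^ 4)
            (measurable_snd.pow_const 4) (measurable_id.pow_const 4)
        exact hident.integrable_mul (lin j s).1 (hε4 j)
      have hD4int : Integrable (fun ω => D ω ^ 4) ℙ := by
        refine (((hU4 j).const_mul (8 * A j j ^ 4)).add (hSe4int.const_mul 128)).mono'
          (hDmeas.pow_const 4).aestronglyMeasurable ?_
        filter_upwards with ω
        rw [Real.norm_eq_abs, abs_of_nonneg (by positivity)]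
        simp only [Pi.add_apply, hD]
        have h1 := pw_add_pow4 (A j j * (ε j ω ^ 2 - 1)) (2 * ε j ω * Sl A ε j s ω)
        nlinarith [h1]
      -- orthogonality
      have hD0 : ∫ ω, Zq A ε s ω ^ 3 * D ω = 0 := by
        have I1 : Integrable (fun ω => Zq A ε s ω ^ 3 * (ε j ω ^ 2 - 1)) ℙ := by
          refine (ih.1.add (hU4 j)).mono'
            (((Zq_meas hmeas A s).pow_const 3).mul
              (((hmeas j).pow_const 2).sub measurable_const)).aestronglyMeasurable ?_
          filter_upwards with ω
          rw [Real.norm_eq_abs]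
          simp only [Pi.add_apply]
          exact pw_cube_mul (Zq A ε s ω) (ε j ω ^ 2 - 1)
        have I2 : Integrable (fun ω => Zq A ε s ω ^ 3 * Sl A ε j s ω * ε j ω) ℙ := by
          refine (ih.1.add hSe4int).mono'
            ((((Zq_meas hmeas A s).pow_const 3).mul (Sl_meas hmeas A j s)).mul
              (hmeas j)).aestronglyMeasurable ?_
          filter_upwards with ω
          rw [Real.norm_eq_abs]
          simp only [Pi.add_apply]
          have h1 := pw_cube_mul (Zq A ε s ω) (Sl A ε j s ω * ε j ω)
          have e : |Zq A ε s ω ^ 3 * Sl A ε j s ω * ε j ω|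
              = |Zq A ε s ω ^ 3 * (Sl A ε j s ω * ε j ω)| := by rw [mul_assoc]
          rw [e]
          nlinarith [h1]
        have e : (fun ω => Zq A ε s ω ^ 3 * D ω)
            = fun ω => A j j * (Zq A ε s ω ^ 3 * (ε j ω ^ 2 - 1))
              + 2 * (Zq A ε s ω ^ 3 * Sl A ε j s ω * ε j ω) := by
          funext ω; rw [hD]; ring
        rw [e, integral_add (I1.const_mul _) (I2.const_mul 2), integral_const_mul,
          integral_const_mul]
        have h1 : ∫ ω, Zq A ε s ω ^ 3 * (ε j ω ^ 2 - 1)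
            = (∫ ω, Zq A ε s ω ^ 3) * ∫ ω, (ε j ω ^ 2 - 1) :=
          indep_mul hmeas hind A s j j hj (fun p => p.1 ^ 3) (fun x => x ^ 2 - 1)
            (measurable_fst.pow_const 3) ((measurable_id.pow_const 2).sub measurable_const)
        have h2 : ∫ ω, Zq A ε s ω ^ 3 * Sl A ε j s ω * ε j ω
            = (∫ ω, Zq A ε s ω ^ 3 * Sl A ε j s ω) * ∫ ω, ε j ω := by
          have := indep_mul hmeas hind A s j j hj (fun p => p.1 ^ 3 * p.2) id
            ((measurable_fst.pow_const 3).mul measurable_snd) measurable_id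
          simpa [mul_assoc] using this
        rw [h1, h2, hU0 j, hm1 j, mul_zero, mul_zero, mul_zero, mul_zero, add_zero]
      -- fourth moment of D
      have hSl4b : ∫ ω, Sl A ε j s ω ^ 4 ≤ 16 * (B + 1) * r ^ 2 := by
        have hnn : (0:ℝ) ≤ ∫ ω, Sl A ε j s ω ^ 4 := integral_nonneg fun ω => by positivity
        have h1 : ∫ ω, Sl A ε j s ω ^ 4 ≤ (4 * Real.sqrt (B + 1) * r) ^ 2 := by
          rw [← Real.sq_sqrt hnn]
          have h2 := (lin j s).2
          have h3 : (0:ℝ) ≤ 4 * Real.sqrt (B + 1) * r := by positivity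
          exact pow_le_pow_left₀ (Real.sqrt_nonneg _) h2 2
        calc ∫ ω, Sl A ε j s ω ^ 4 ≤ (4 * Real.sqrt (B + 1) * r) ^ 2 := h1
        _ = 16 * (Real.sqrt (B + 1)) ^ 2 * r ^ 2 := by ring
        _ = 16 * (B + 1) * r ^ 2 := by rw [Real.sq_sqrt hB1]
      have hSe4 : ∫ ω, Sl A ε j s ω ^ 4 * ε j ω ^ 4
          = (∫ ω, Sl A ε j s ω ^ 4) * ∫ ω, ε j ω ^ 4 :=
        indep_mul hmeas hind A s j j hj (fun p => p.2 ^ 4) (fun x => x ^ 4)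
          (measurable_snd.pow_const 4) (measurable_id.pow_const 4)
      have hD4b : ∫ ω, D ω ^ 4 ≤ (46 * (B + 1) * (A j j ^ 2 + r)) ^ 2 := by
        have h1 : ∫ ω, D ω ^ 4
            ≤ ∫ ω, (8 * A j j ^ 4 * (ε j ω ^ 2 - 1) ^ 4
              + 128 * (Sl A ε j s ω ^ 4 * ε j ω ^ 4)) := by
          refine integral_mono hD4int
            (((hU4 j).const_mul (8 * A j j ^ 4)).add (hSe4int.const_mul 128)) fun ω => ?_
          simp only [hD]
          have h2 := pw_add_pow4 (A j j * (ε j ω ^ 2 - 1)) (2 * ε j ω * Sl A ε j s ω)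
          nlinarith [h2]
        have h2 : ∫ ω, (8 * A j j ^ 4 * (ε j ω ^ 2 - 1) ^ 4
              + 128 * (Sl A ε j s ω ^ 4 * ε j ω ^ 4))
            = 8 * A j j ^ 4 * (∫ ω, (ε j ω ^ 2 - 1) ^ 4)
              + 128 * ((∫ ω, Sl A ε j s ω ^ 4) * ∫ ω, ε j ω ^ 4) := by
          rw [integral_add ((hU4 j).const_mul _) (hSe4int.const_mul 128), integral_const_mul,
            integral_const_mul, hSe4]
        rw [h2] at h1
        have hSlnn : (0:ℝ) ≤ ∫ ω, Sl A ε j s ω ^ 4 := integral_nonneg fun ω => by positivity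
        have hε4nn : (0:ℝ) ≤ ∫ ω, ε j ω ^ 4 := integral_nonneg fun ω => by positivity
        have h3 : (∫ ω, Sl A ε j s ω ^ 4) * ∫ ω, ε j ω ^ 4 ≤ (16 * (B + 1) * r ^ 2) * (B + 1) :=
          mul_le_mul hSl4b (hε4b j) hε4nn (by positivity)
        have h4 := hU4b j
        have h5 : 0 ≤ A j j ^ 2 * r := mul_nonneg (sq_nonneg _) hr0
        nlinarith [h1, h3, h4, sq_nonneg (A j j), sq_nonneg r, hB1,
          mul_nonneg (mul_nonneg hB1 hB1) h5, mul_nonneg hB1 (sq_nonneg (A j j ^ 2)),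
          mul_nonneg (mul_nonneg hB1 hB1) (sq_nonneg r), mul_nonneg hB1 (sq_nonneg (A j j)),
          mul_nonneg (mul_nonneg hB1 hB1) (sq_nonneg (A j j ^ 2)), hB]
      have hDs : Real.sqrt (∫ ω, D ω ^ 4) ≤ 46 * (B + 1) * (A j j ^ 2 + r) := by
        have hnn : (0:ℝ) ≤ 46 * (B + 1) * (A j j ^ 2 + r) := by
          have : (0:ℝ) ≤ A j j ^ 2 + r := by nlinarith [sq_nonneg (A j j)]
          positivity
        exact (Real.sqrt_le_sqrt hD4b).trans (Real.sqrt_sq hnn).le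
      -- apply the smoothness lemma
      have happ := aux_lemA (μ := (ℙ : Measure Ω)) (f := Zq A ε s) (g := D)
        (Zq_meas hmeas A s).aestronglyMeasurable hDmeas.aestronglyMeasurable ih.1 hD4int hD0
      -- sum identity
      have hsum : ∑ u ∈ insert j s, ∑ t ∈ insert j s, A u t ^ 2
          = A j j ^ 2 + 2 * r + ∑ u ∈ s, ∑ t ∈ s, A u t ^ 2 := by
        rw [Finset.sum_insert hj]
        simp only [Finset.sum_insert hj]
        rw [Finset.sum_add_distrib]
        have e1 : ∑ u ∈ s, A u j ^ 2 = r := by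
          rw [hr]
          exact Finset.sum_congr rfl fun u _ => by rw [hsym u j]
        rw [e1, hr]
        ring
      constructor
      · rw [hdec]
        refine ((ih.1.const_mul 8).add (hD4int.const_mul 8)).mono'
          (((Zq_meas hmeas A s).add hDmeas).pow_const 4).aestronglyMeasurable ?_
        filter_upwards with ω
        rw [Real.norm_eq_abs, abs_of_nonneg (by positivity)]
        simp only [Pi.add_apply]
        exact pw_add_pow4 _ _
      · rw [hdec, hsum]
        have hZnn : (0:ℝ) ≤ ∫ ω, Zq A ε s ω ^ 4 := integral_nonneg fun ω => by positivity
        have hDnn : (0:ℝ) ≤ ∫ ω, D ω ^ 4 := integral_nonneg fun ω => by positivity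
        calc Real.sqrt (∫ ω, (Zq A ε s ω + D ω) ^ 4)
            ≤ Real.sqrt ((Real.sqrt (∫ ω, Zq A ε s ω ^ 4)
              + 4 * Real.sqrt (∫ ω, D ω ^ 4)) ^ 2) := Real.sqrt_le_sqrt happ
        _ = Real.sqrt (∫ ω, Zq A ε s ω ^ 4) + 4 * Real.sqrt (∫ ω, D ω ^ 4) := by
            exact Real.sqrt_sq (by positivity)
        _ ≤ (184 * (B + 1) * ∑ u ∈ s, ∑ t ∈ s, A u t ^ 2)
              + 4 * (46 * (B + 1) * (A j j ^ 2 + r)) := by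
            exact add_le_add ih.2 (by linarith [hDs])
        _ ≤ 184 * (B + 1) * (A j j ^ 2 + 2 * r + ∑ u ∈ s, ∑ t ∈ s, A u t ^ 2) := by
            nlinarith [mul_nonneg hB1 hr0]

lemma mem8_int {Ω : Type} [MeasureSpace Ω] {f : Ω → ℝ} (h : MemLp f 8 ℙ) :
    Integrable (fun ω => f ω ^ 8) ℙ := by
  have h1 := h.integrable_norm_rpow (by norm_num) (by norm_num)
  have e : (fun ω => ‖f ω‖ ^ (8 : ℝ≥0∞).toReal) = fun ω => f ω ^ 8 := by
    funext ω
    rw [show ((8 : ℝ≥0∞)).toReal = ((8:ℕ):ℝ) by simp, Real.rpow_natCast, Real.norm_eq_abs,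
      pow_abs, abs_of_nonneg (by positivity)]
  rwa [e] at h1

/-- Fourth-moment bound for quadratic forms: there is a constant `C` depending only on `κ₈`
such that for any independent standardized `ε_i` with eighth moments bounded by `κ₈` and any
real symmetric matrix `A`, `E[(ε'Aε - tr A)⁴] ≤ C ‖A‖_F⁴`. -/
theorem stmt_16 (κ₈ : ℝ) :
    ∃ C : ℝ, ∀ (Ω : Type) (_ : MeasureSpace Ω),
      IsProbabilityMeasure (ℙ : Measure Ω) →
      ∀ (n : ℕ) (ε : Fin n → Ω → ℝ) (A : Matrix (Fin n) (Fin n) ℝ),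
        A.IsSymm →
        (∀ i, Measurable (ε i)) →
        iIndepFun ε ℙ →
        (∀ i, MemLp (ε i) 8 ℙ) →
        (∀ i, ∫ ω, ε i ω = 0) →
        (∀ i, ∫ ω, (ε i ω) ^ 2 = 1) →
        (∀ i, ∫ ω, (ε i ω) ^ 8 ≤ κ₈) →
        (∫ ω, ((∑ s, ∑ t, A s t * ε s ω * ε t ω) - A.trace) ^ 4) ≤
          C * Real.sqrt ((Aᵀ * A).trace) ^ 4 := by
  refine ⟨(184 * (max κ₈ 1 + 1)) ^ 2, ?_⟩
  intro Ω _ hP n ε A hA hmeas hind hL8 hm1 hm2 hm8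
  haveI := hP
  set B : ℝ := max κ₈ 1 with hB
  have hB1 : 1 ≤ B := le_max_right _ _
  have h8 : ∀ i, Integrable (fun ω => ε i ω ^ 8) ℙ := fun i => mem8_int (hL8 i)
  have hm8' : ∀ i, ∫ ω, ε i ω ^ 8 ≤ B := fun i => (hm8 i).trans (le_max_left _ _)
  have hmain := (main_aux hP ε A B hB1 hA hmeas hind h8 hm1 hm2 hm8' Finset.univ).2
  have hT : (Aᵀ * A).trace = ∑ u : Fin n, ∑ t : Fin n, A u t ^ 2 := by
    rw [Matrix.trace]
    simp only [Matrix.diag_apply, Matrix.mul_apply, Matrix.transpose_apply]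
    rw [Finset.sum_comm]
    exact Finset.sum_congr rfl fun u _ => Finset.sum_congr rfl fun t _ => by ring
  have hZ : (fun ω => Zq A ε Finset.univ ω ^ 4)
      = fun ω => ((∑ s, ∑ t, A s t * ε s ω * ε t ω) - A.trace) ^ 4 := by
    funext ω
    rw [Zq, Matrix.trace]
    simp [Matrix.diag_apply]
  have hT0 : (0:ℝ) ≤ (Aᵀ * A).trace := by
    rw [hT]
    exact Finset.sum_nonneg fun u _ => Finset.sum_nonneg fun t _ => by positivity
  have hZnn : (0:ℝ) ≤ ∫ ω, Zq A ε Finset.univ ω ^ 4 :=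
    integral_nonneg fun ω => by positivity
  have key : ∫ ω, Zq A ε Finset.univ ω ^ 4 ≤ (184 * (B + 1) * (Aᵀ * A).trace) ^ 2 := by
    rw [← Real.sq_sqrt hZnn]
    refine pow_le_pow_left₀ (Real.sqrt_nonneg _) ?_ 2
    rw [hT]
    exact hmain
  have e2 : Real.sqrt ((Aᵀ * A).trace) ^ 4 = ((Aᵀ * A).trace) ^ 2 := by
    rw [show (4:ℕ) = 2 * 2 by norm_num, pow_mul, Real.sq_sqrt hT0]
  rw [← hZ, e2]
  calc ∫ ω, Zq A ε Finset.univ ω ^ 4 ≤ (184 * (B + 1) * (Aᵀ * A).trace) ^ 2 := key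
  _ = (184 * (B + 1)) ^ 2 * ((Aᵀ * A).trace) ^ 2 := by ring
  _ = (184 * (max κ₈ 1 + 1)) ^ 2 * ((Aᵀ * A).trace) ^ 2 := by rw [hB]
end
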